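/- Let U be an open unbounded subset of (0, ∞) and 0 < a < b. Then for every n ∈ ℕ there exist an integer n' ≥ n and reals a' < b' with [a', b'] ⊆ (a, b) such that n'·[a', b'] ⊆ U. -/

import Mathlib

theorem croft_lemma_intervals (U : Set ℝ) (hU : IsOpen U) (hsub : U ⊆ Set.Ioi (0:ℝ))
    (hunb : ∀ M : ℝ, ∃ u ∈ U, u > M)
    (a b : ℝ) (ha : 0 < a) (hab : a < b) (n : ℕ) :
    ∃ n' : ℕ, n' ≥ n ∧ ∃ a' b' : ℝ, a' < b' ∧ Set.Icc a' b' ⊆ Set.Ioo a b ∧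
      ∀ t ∈ Set.Icc a' b', (n' : ℝ) * t ∈ U := by
  obtain ⟨u, huU, hu⟩ := hunb (max ((n : ℝ) * b) (a * b / (b - a)))
  have hu0 : 0 < u := hsub huU
  have hba : 0 < b - a := sub_pos.mpr hab
  have hb0 : 0 < b := ha.trans hab
  set k : ℕ := ⌊u / b⌋₊ + 1 with hk
  have hk0 : (0:ℝ) < (k : ℝ) := by exact_mod_cast Nat.succ_pos _
  have hub : u < (k : ℝ) * b := by
    have h := Nat.lt_floor_add_one (u / b)
    have : u / b < (k : ℝ) := by rw [hk]; push_cast; exact h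
    calc u = (u / b) * b := by field_simp
    _ < (k : ℝ) * b := mul_lt_mul_of_pos_right this hb0
  have hua : (k:ℝ) * a < u := by
    have hfloor : (⌊u / b⌋₊ : ℝ) ≤ u / b := Nat.floor_le (by positivity)
    have hkle : (k : ℝ) ≤ u / b + 1 := by rw [hk]; push_cast; linarith
    have h1 : (k:ℝ) * a ≤ (u / b + 1) * a := mul_le_mul_of_nonneg_right hkle ha.le
    have hu2 : a * b / (b - a) < u := (le_max_right _ _).trans_lt hu
    have hu3 : a * b < u * (b - a) := (div_lt_iff₀ hba).mp hu2
    have h2 : (u / b + 1) * a < u := by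
      rw [div_add' _ _ _ hb0.ne', div_mul_eq_mul_div, div_lt_iff₀ hb0]
      nlinarith
    linarith
  have hkn : n ≤ k := by
    have h1 : (n:ℝ) * b ≤ u := le_of_lt ((le_max_left _ _).trans_lt hu)
    have h2 : (n:ℝ) < (k : ℝ) := by nlinarith
    exact_mod_cast h2.le
  obtain ⟨ε, hε, hball⟩ := Metric.isOpen_iff.mp hU u huU
  set δ := min (ε/2) (min ((u - k*a)/2) ((k*b - u)/2)) with hδdef
  have hδ : 0 < δ := lt_min (by linarith) (lt_min (by linarith) (by linarith))
  have hδε : δ < ε := (min_le_left _ _).trans_lt (by linarith)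
  have hδ1 : δ ≤ (u - k*a)/2 := (min_le_right _ _).trans (min_le_left _ _)
  have hδ2 : δ ≤ (k*b - u)/2 := (min_le_right _ _).trans (min_le_right _ _)
  refine ⟨k, hkn, (u - δ)/k, (u + δ)/k, ?_, ?_, ?_⟩
  · rw [div_lt_div_iff₀ hk0 hk0]; nlinarith
  · rintro t ⟨h1, h2⟩
    rw [div_le_iff₀ hk0] at h1
    rw [le_div_iff₀ hk0] at h2
    constructor <;> nlinarith
  · rintro t ⟨h1, h2⟩
    rw [div_le_iff₀ hk0] at h1
    rw [le_div_iff₀ hk0] at h2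
    apply hball
    rw [Metric.mem_ball, Real.dist_eq, abs_lt]
    constructor <;> nlinarith
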